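/- Let k \ge 6, m = (k + \sqrt{k^2 + 1/27})^{1/6}, y_0 = m^2 - 1/(3m^2), and F_k(y) = (2y^2 - 4y + 3)/\sqrt{y(4y^4 - 12y^3 + 9y^2 + 10ky - 12k)}. Then F_k(y_0) < 2/(3m) < (2/3)(2k)^{-1/6}. -/
import Mathlib


noncomputable def Fk (k : ℕ) (y : ℝ) : ℝ :=
  (2 * y ^ 2 - 4 * y + 3) /
    Real.sqrt (y * (4 * y ^ 4 - 12 * y ^ 3 + 9 * y ^ 2 + 10 * k * y - 12 * k))

set_option maxHeartbeats 800000 in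
theorem Fk_bound (k : ℕ) (hk : 6 ≤ k) :
    let m : ℝ := ((k : ℝ) + Real.sqrt ((k : ℝ) ^ 2 + 1 / 27)) ^ ((1 : ℝ) / 6)
    let y0 : ℝ := m ^ 2 - 1 / (3 * m ^ 2)
    Fk k y0 < 2 / (3 * m) ∧
      2 / (3 * m) < 2 / 3 * (2 * (k : ℝ)) ^ (-(1 : ℝ) / 6) := by
  intro m y0
  have hk6 : (6 : ℝ) ≤ (k : ℝ) := by exact_mod_cast hk
  set s : ℝ := Real.sqrt ((k : ℝ) ^ 2 + 1 / 27) with hs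
  have hs2 : s ^ 2 = (k : ℝ) ^ 2 + 1 / 27 := Real.sq_sqrt (by positivity)
  have hsk : (k : ℝ) < s := by
    nlinarith [Real.sqrt_nonneg ((k : ℝ) ^ 2 + 1 / 27)]
  have hA : (0 : ℝ) < (k : ℝ) + s := by linarith
  have hm : (0 : ℝ) < m := Real.rpow_pos_of_pos hA _
  have hm6 : m ^ 6 = (k : ℝ) + s := by
    show (((k : ℝ) + s) ^ ((1 : ℝ) / 6)) ^ (6 : ℕ) = (k : ℝ) + s
    rw [← Real.rpow_natCast ((((k : ℝ) + s) ^ ((1 : ℝ) / 6))) 6,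
      ← Real.rpow_mul hA.le]
    norm_num
  have hkey : m ^ 12 = 2 * (k : ℝ) * m ^ 6 + 1 / 27 := by
    have : m ^ 12 = (m ^ 6) ^ 2 := by ring
    rw [this, hm6]; nlinarith [hs2]
  have hu : (0 : ℝ) < m ^ 2 := by positivity
  have hm0 : m ≠ 0 := ne_of_gt hm
  have hcube : y0 ^ 3 + y0 = 2 * (k : ℝ) := by
    show (m ^ 2 - 1 / (3 * m ^ 2)) ^ 3 + (m ^ 2 - 1 / (3 * m ^ 2)) = 2 * (k : ℝ)
    field_simp
    first
    | linear_combination (81 * m ^ 2 - 27) * hkey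
    | linear_combination 27 * hkey
    | linear_combination (27 - 81 * m ^ 2) * hkey
    | linear_combination (-27 : ℝ) * hkey
    | linear_combination (81 * m ^ 2) * hkey
  have hq : 3 * m ^ 4 - 3 * y0 * m ^ 2 = 1 := by
    show 3 * m ^ 4 - 3 * (m ^ 2 - 1 / (3 * m ^ 2)) * m ^ 2 = 1
    field_simp
    ring
  have hm6gt : 2 * (k : ℝ) < m ^ 6 := by rw [hm6]; linarith
  clear_value y0
  clear_value m
  clear hs hm6 hkey hs2 hsk hA
  clear_value s
  clear s
  have hy2 : (2 : ℝ) < y0 := by nlinarith [sq_nonneg (y0 + 1)]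
  have hy0pos : (0 : ℝ) < y0 := by linarith
  have hmy : y0 < m ^ 2 := by nlinarith
  have hA2 : 3 * y0 * m ^ 2 < 3 * y0 ^ 2 + 1 := by
    nlinarith [sq_nonneg (m ^ 2 - y0)]
  set R : ℝ := y0 * (4 * y0 ^ 4 - 12 * y0 ^ 3 + 9 * y0 ^ 2 + 10 * k * y0 - 12 * k) with hRdef
  set Q : ℝ := 9 * y0 ^ 3 - 18 * y0 ^ 2 + 14 * y0 - 6 with hQdef
  have hQpos : 0 < Q := by rw [hQdef]; nlinarith
  have hRQ : R = y0 ^ 2 * Q := by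
    rw [hRdef, hQdef]
    linear_combination (6 * y0 - 5 * y0 ^ 2) * hcube
  have hRpos : 0 < R := by rw [hRQ]; positivity
  set N : ℝ := 2 * y0 ^ 2 - 4 * y0 + 3 with hNdef
  have hFk : Fk k y0 = N / Real.sqrt R := rfl
  clear_value R Q N
  have hNpos : 0 < N := by rw [hNdef]; nlinarith [sq_nonneg (y0 - 1)]
  have ht : (0 : ℝ) < y0 - 2 := by linarith
  have hquint : (9 * y0 ^ 2 + 3) * N ^ 2 ≤ 4 * y0 ^ 3 * Q := by
    rw [hNdef, hQdef]
    nlinarith [pow_pos ht 2, pow_pos ht 3, pow_pos ht 4, pow_pos ht 5, ht]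
  have hpoly : 9 * m ^ 2 * N ^ 2 * y0 < 4 * y0 ^ 3 * Q := by
    have h1 : 9 * m ^ 2 * N ^ 2 * y0 < (9 * y0 ^ 2 + 3) * N ^ 2 := by
      nlinarith [mul_lt_mul_of_pos_left hA2 (by positivity : (0:ℝ) < 3 * N ^ 2)]
    linarith
  constructor
  · -- Fk k y0 < 2 / (3 * m)
    have hsqrtR : 0 < Real.sqrt R := Real.sqrt_pos.mpr hRpos
    rw [hFk, div_lt_div_iff₀ hsqrtR (by positivity)]
    have hmn : (0 : ℝ) ≤ 3 * m * N / 2 := by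
      have := mul_pos (mul_pos (by norm_num : (0:ℝ) < 3) hm) hNpos
      linarith
    have h3 : (3 : ℝ) * m * N / 2 < Real.sqrt R := by
      rw [Real.lt_sqrt hmn, hRQ]
      nlinarith [hpoly, hy0pos, mul_pos hy0pos hQpos]
    linarith [h3]
  · -- second inequality
    have h2k : (0 : ℝ) < 2 * (k : ℝ) := by linarith
    have hm16 : ((m ^ 6 : ℝ)) ^ ((1 : ℝ) / 6) = m := by
      rw [← Real.rpow_natCast m 6, ← Real.rpow_mul hm.le]
      norm_num
    have hlt : (2 * (k : ℝ)) ^ ((1 : ℝ) / 6) < m := by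
      calc (2 * (k : ℝ)) ^ ((1 : ℝ) / 6) < (m ^ 6) ^ ((1 : ℝ) / 6) :=
            Real.rpow_lt_rpow (by positivity) hm6gt (by norm_num)
        _ = m := hm16
    have hcpos : 0 < (2 * (k : ℝ)) ^ ((1 : ℝ) / 6) := Real.rpow_pos_of_pos h2k _
    have hneg : (2 * (k : ℝ)) ^ (-(1 : ℝ) / 6) = ((2 * (k : ℝ)) ^ ((1 : ℝ) / 6))⁻¹ := by
      rw [← Real.rpow_neg h2k.le]; norm_num
    rw [hneg]
    rw [show (2:ℝ) / 3 * ((2 * (k : ℝ)) ^ ((1 : ℝ) / 6))⁻¹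
        = 2 / (3 * (2 * (k : ℝ)) ^ ((1 : ℝ) / 6)) by
      field_simp]
    apply div_lt_div_of_pos_left (by norm_num) (by positivity)
    nlinarith
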